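/- arXiv:2405.04588 — 2 statements merged into one kernel-verified Lean document; each statement's English description precedes it below -/
import Mathlib

section
/- Let e and f be orthogonal idempotents in a prime ring R such that the corner rings eRe and fRf are division rings. Then eRe and fRf are isomorphic as rings. -/
/-- The additive subgroup underlying the corner ring `eRe`. -/
def cornerAddSubgroup {R : Type*} [Ring R] (e : R) : AddSubgroup R where
  carrier := {x | e * x * e = x}
  add_mem' := by intro a b ha hb; simp only [Set.mem_setOf_eq] at *; rw [mul_add, add_mul, ha, hb]
  zero_mem' := by simp
  neg_mem' := by intro a ha; simp only [Set.mem_setOf_eq] at *; rw [mul_neg, neg_mul, ha]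

/-- The corner ring `eRe` associated with an idempotent `e` of a ring `R`:
its elements are the `x ∈ R` with `e * x * e = x`. -/
def Corner {R : Type*} [Ring R] (e : R) (_he : e * e = e) : Type _ :=
  cornerAddSubgroup e

namespace Corner

variable {R : Type*} [Ring R] {e : R} {he : e * e = e}

theorem prop (a : Corner e he) : e * a.1 * e = a.1 := a.2

instance : AddCommGroup (Corner e he) :=
  inferInstanceAs (AddCommGroup (cornerAddSubgroup e))

theorem left_absorb (a : Corner e he) : e * a.1 = a.1 := by
  conv_lhs => rw [← prop a]
  rw [← mul_assoc, ← mul_assoc, he, prop a]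

theorem right_absorb (a : Corner e he) : a.1 * e = a.1 := by
  conv_lhs => rw [← prop a]
  rw [mul_assoc, mul_assoc, he, ← mul_assoc, prop a]

instance instRing : Ring (Corner e he) :=
  { (inferInstance : AddCommGroup (Corner e he)) with
    mul := fun a b => ⟨a.1 * b.1, by
      show e * (a.1 * b.1) * e = a.1 * b.1
      rw [mul_assoc, mul_assoc, right_absorb b, ← mul_assoc, left_absorb a]⟩
    one := ⟨e, by show e * e * e = e; rw [he, he]⟩
    mul_assoc := fun a b c => Subtype.ext (mul_assoc a.1 b.1 c.1)
    one_mul := fun a => Subtype.ext (left_absorb a)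
    mul_one := fun a => Subtype.ext (right_absorb a)
    left_distrib := fun a b c => Subtype.ext (mul_add a.1 b.1 c.1)
    right_distrib := fun a b c => Subtype.ext (add_mul a.1 b.1 c.1)
    zero_mul := fun a => Subtype.ext (zero_mul a.1)
    mul_zero := fun a => Subtype.ext (mul_zero a.1) }

@[simp] theorem val_mul (a b : Corner e he) : (a * b).1 = a.1 * b.1 := rfl
@[simp] theorem val_add (a b : Corner e he) : (a + b).1 = a.1 + b.1 := rfl
@[simp] theorem val_one : (1 : Corner e he).1 = e := rfl
@[simp] theorem val_zero : (0 : Corner e he).1 = 0 := rfl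

end Corner

/-- Let `e` and `f` be orthogonal idempotents in a prime ring `R` such that the corner
rings `eRe` and `fRf` are division rings (they are nonzero and every nonzero element has a
two-sided inverse with respect to the respective unity).  Then `eRe ≅ fRf` as rings. -/
theorem corner_ringEquiv_corner (R : Type*) [Ring R]
    (hprime : ∀ a b : R, (∀ x : R, a * x * b = 0) → a = 0 ∨ b = 0)
    (e f : R) (he : e * e = e) (hf : f * f = f) (hef : e * f = 0) (hfe : f * e = 0)
    (hene : e ≠ 0) (hfne : f ≠ 0)
    (heD : ∀ x : R, e * x * e = x → x ≠ 0 → ∃ y : R, e * y * e = y ∧ x * y = e ∧ y * x = e)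
    (hfD : ∀ x : R, f * x * f = x → x ≠ 0 → ∃ y : R, f * y * f = y ∧ x * y = f ∧ y * x = f) :
    Nonempty (Corner e he ≃+* Corner f hf) := by
  obtain ⟨u, hu⟩ : ∃ u : R, e * u * f ≠ 0 := by
    by_contra h
    push_neg at h
    rcases hprime e f h with h' | h'
    · exact hene h'
    · exact hfne h'
  obtain ⟨a, hea, haf, hane⟩ : ∃ a : R, e * a = a ∧ a * f = a ∧ a ≠ 0 := by
    refine ⟨e * u * f, ?_, ?_, hu⟩
    · rw [← mul_assoc, ← mul_assoc, he]
    · rw [mul_assoc, hf]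
  have haf' : ∀ z : R, a * (f * z) = a * z := fun z => by rw [← mul_assoc, haf]
  obtain ⟨v, hv⟩ : ∃ v : R, a * v * a ≠ 0 := by
    by_contra h
    push_neg at h
    rcases hprime a a h with h' | h' <;> exact hane h'
  obtain ⟨b, hfb, hbe, haba⟩ : ∃ b : R, f * b = b ∧ b * e = b ∧ a * b * a ≠ 0 := by
    refine ⟨f * v * e, ?_, ?_, ?_⟩
    · rw [← mul_assoc, ← mul_assoc, hf]
    · rw [mul_assoc, he]
    · have h1 : a * (f * v * e) * a = a * v * a := by
        simp only [mul_assoc]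
        rw [hea, ← mul_assoc a f, haf]
      rw [h1]; exact hv
  have hfb' : ∀ z : R, f * (b * z) = b * z := fun z => by rw [← mul_assoc, hfb]
  have hmem_ab : e * (a * b) * e = a * b := by
    simp only [mul_assoc]
    rw [hbe, ← mul_assoc, hea]
  have hab_ne : a * b ≠ 0 := fun h0 => haba (by rw [h0, zero_mul])
  obtain ⟨c, hc, habc, hcab⟩ := heD (a * b) hmem_ab hab_ne
  have hmem_ba : f * (b * a) * f = b * a := by
    simp only [mul_assoc]
    rw [haf, ← mul_assoc, hfb]
  have hba_ne : b * a ≠ 0 := fun h0 => haba (by rw [mul_assoc, h0, mul_zero])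
  obtain ⟨d, hd, hbad, hdba⟩ := hfD (b * a) hmem_ba hba_ne
  -- chain lemmas
  have hcab' : ∀ z : R, c * (a * (b * z)) = e * z := fun z => by
    rw [← mul_assoc a b z, ← mul_assoc, hcab]
  have hdba' : ∀ z : R, d * (b * (a * z)) = f * z := fun z => by
    rw [← mul_assoc b a z, ← mul_assoc, hdba]
  have hbad' : ∀ z : R, b * (a * (d * z)) = f * z := fun z => by
    rw [← mul_assoc a d z, ← mul_assoc, ← mul_assoc, hbad]
  have hbad2 : b * (a * d) = f := by rw [← mul_assoc, hbad]
  have habc2 : a * (b * c) = e := by rw [← mul_assoc, habc]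
  have hbca : b * (c * a) = f := by
    calc b * (c * a) = b * (c * (a * f)) := by rw [haf]
      _ = b * (c * a) * (b * (a * d)) := by rw [hbad2]; simp only [mul_assoc]
      _ = f := by
          simp only [mul_assoc]
          rw [hcab' (a * d), ← mul_assoc e a d, hea, hbad2]
  have hadb : a * (d * b) = e := by
    calc a * (d * b) = a * (d * (b * e)) := by rw [hbe]
      _ = a * (d * b) * (a * (b * c)) := by rw [habc2]; simp only [mul_assoc]
      _ = e := by
          simp only [mul_assoc]
          rw [hdba' (b * c), haf' (b * c), habc2]
  have hadb' : ∀ z : R, a * (d * (b * z)) = e * z := fun z => by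
    rw [← mul_assoc d b z, ← mul_assoc, hadb]
  refine ⟨{
    toFun := fun x => ⟨b * x.1 * c * a, show f * (b * x.1 * c * a) * f = b * x.1 * c * a by
      simp only [mul_assoc]
      rw [haf, hfb']⟩
    invFun := fun y => ⟨a * d * y.1 * b, show e * (a * d * y.1 * b) * e = a * d * y.1 * b by
      simp only [mul_assoc]
      rw [hbe, ← mul_assoc, hea]⟩
    left_inv := fun x => Subtype.ext (by
      show a * d * (b * x.1 * c * a) * b = x.1
      simp only [mul_assoc]
      rw [hcab, Corner.right_absorb x, hadb' x.1, Corner.left_absorb x])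
    right_inv := fun y => Subtype.ext (by
      show b * (a * d * y.1 * b) * c * a = y.1
      simp only [mul_assoc]
      rw [hbca, Corner.right_absorb y, hbad' y.1, Corner.left_absorb y])
    map_mul' := fun x y => Subtype.ext (by
      show b * (x.1 * y.1) * c * a = (b * x.1 * c * a) * (b * y.1 * c * a)
      simp only [mul_assoc]
      rw [hcab' (y.1 * (c * a)), ← mul_assoc e y.1 (c * a), Corner.left_absorb y])
    map_add' := fun x y => Subtype.ext (by
      show b * (x.1 + y.1) * c * a = b * x.1 * c * a + b * y.1 * c * a
      rw [mul_add, add_mul, add_mul]) }⟩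
end

section
/- Let R be a prime ring containing pairwise orthogonal idempotents e_1, …, e_n such that e_1 + ⋯ + e_n = 1 and each corner ring e_iRe_i (with unity e_i) is a division ring. Then R is isomorphic as a ring to the matrix ring M_n(e_1Re_1). -/
namespace Corner

variable {R : Type*} [Ring R] {e : R} {he : e * e = e}

theorem val_sum {ι : Type*} (s : Finset ι) (F : ι → Corner e he) :
    (∑ i ∈ s, F i).1 = ∑ i ∈ s, (F i).1 := by
  classical
  induction s using Finset.induction_on with
  | empty => simp
  | insert a s h ih => rw [Finset.sum_insert h, Finset.sum_insert h, val_add, ih]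

end Corner

/-- If a prime ring `R` contains pairwise orthogonal idempotents `d i` (`i : Fin n`)
whose sum is `1` and such that each corner ring `(d i) R (d i)` is a division ring
(nonzero, and every nonzero element has a two-sided inverse with respect to the unity
`d i`), then `R ≅ Mₙ((d 0) R (d 0))`. -/
theorem ringEquiv_matrix_of_division_corners (R : Type*) [Ring R]
    (hprime : ∀ a b : R, (∀ x : R, a * x * b = 0) → a = 0 ∨ b = 0)
    (n : ℕ) (hn : 0 < n) (d : Fin n → R)
    (hidem : ∀ i, d i * d i = d i)
    (horth : ∀ i j, i ≠ j → d i * d j = 0)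
    (hsum : ∑ i, d i = 1)
    (hne : ∀ i, d i ≠ 0)
    (hdiv : ∀ (i : Fin n) (x : R), d i * x * d i = x → x ≠ 0 →
      ∃ y : R, d i * y * d i = y ∧ x * y = d i ∧ y * x = d i) :
    Nonempty (R ≃+* Matrix (Fin n) (Fin n) (Corner (d ⟨0, hn⟩) (hidem ⟨0, hn⟩))) := by
  classical
  set i0 : Fin n := ⟨0, hn⟩ with hi0
  -- Step 1: construct `f i ∈ d i0 • R • d i` and `g i ∈ d i • R • d i0` with
  -- `f i * g i = d i0` and `g i * f i = d i`.
  have key : ∀ i : Fin n, ∃ F G : R,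
      (d i0 * F * d i = F) ∧ (d i * G * d i0 = G) ∧ F * G = d i0 ∧ G * F = d i := by
    intro i
    have hx_ex : ∃ a : R, d i0 * a * d i ≠ 0 := by
      by_contra h
      push_neg at h
      rcases hprime (d i0) (d i) h with h' | h' <;> exact hne _ h'
    obtain ⟨a, ha'⟩ := hx_ex
    obtain ⟨x, hx0, hxi, ha⟩ : ∃ x : R, d i0 * x = x ∧ x * d i = x ∧ x ≠ 0 :=
      ⟨d i0 * a * d i, by rw [← mul_assoc, ← mul_assoc, hidem],
        by rw [mul_assoc, hidem], ha'⟩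
    have hb_ex : ∃ b : R, x * b * x ≠ 0 := by
      by_contra h
      push_neg at h
      rcases hprime x x h with h' | h' <;> exact ha h'
    obtain ⟨b, hb⟩ := hb_ex
    obtain ⟨y, hyi, hy0, hxyx⟩ :
        ∃ y : R, d i * y = y ∧ y * d i0 = y ∧ x * y * x = x * b * x :=
      ⟨d i * b * d i0, by rw [← mul_assoc, ← mul_assoc, hidem],
        by rw [mul_assoc, hidem],
        by rw [← mul_assoc, ← mul_assoc, hxi, mul_assoc, hx0]⟩
    obtain ⟨t, htdef⟩ : ∃ t : R, t = x * y := ⟨_, rfl⟩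
    have ht_cor : d i0 * t * d i0 = t := by
      rw [htdef, ← mul_assoc, hx0, mul_assoc, hy0]
    have ht0 : t ≠ 0 := by
      intro h
      apply hb
      rw [← hxyx, ← htdef, h, zero_mul]
    obtain ⟨z, hz_cor, htz, hzt⟩ := hdiv i0 t ht_cor ht0
    have hz0 : z * d i0 = z := by
      conv_lhs => rw [← hz_cor, mul_assoc, hidem]
      exact hz_cor
    have h3 : x * (y * z) = d i0 := by rw [← mul_assoc, ← htdef, htz]
    have hxs : x * (y * z * x) = x := by rw [← mul_assoc, h3, hx0]
    have hss : (y * z * x) * (y * z * x) = y * z * x := by rw [mul_assoc, hxs]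
    have hs0 : y * z * x ≠ 0 := by
      intro h
      exact ha (by rw [← hxs, h, mul_zero])
    have hsdi : (y * z * x) * d i = y * z * x := by rw [mul_assoc, hxi]
    have hs_cor : d i * (y * z * x) * d i = y * z * x := by
      rw [← mul_assoc, ← mul_assoc, hyi, hsdi]
    obtain ⟨w, hw_cor, hsw, hws⟩ := hdiv i (y * z * x) hs_cor hs0
    have hfinal : y * z * x = d i := by
      calc y * z * x = (y * z * x) * d i := hsdi.symm
        _ = (y * z * x) * ((y * z * x) * w) := by rw [hsw]
        _ = ((y * z * x) * (y * z * x)) * w := (mul_assoc (y * z * x) (y * z * x) w).symm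
        _ = (y * z * x) * w := by rw [hss]
        _ = d i := hsw
    refine ⟨x, y * z, ?_, ?_, h3, hfinal⟩
    · rw [hx0, hxi]
    · rw [← mul_assoc, hyi, mul_assoc, hz0]
  choose f g hf hg hfg hgf using key
  -- absorption lemmas
  have hf0 : ∀ i, d i0 * f i = f i := fun i => by
    conv_lhs => rw [← hf i, ← mul_assoc, ← mul_assoc, hidem]
    exact hf i
  have hfi : ∀ i, f i * d i = f i := fun i => by
    conv_lhs => rw [← hf i, mul_assoc, hidem]
    exact hf i
  have hgi : ∀ i, d i * g i = g i := fun i => by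
    conv_lhs => rw [← hg i, ← mul_assoc, ← mul_assoc, hidem]
    exact hg i
  have hg0 : ∀ i, g i * d i0 = g i := fun i => by
    conv_lhs => rw [← hg i, mul_assoc, hidem]
    exact hg i
  have hfg0 : ∀ i j, i ≠ j → f i * g j = 0 := by
    intro i j hij
    conv_lhs => rw [← hfi i, ← hgi j]
    rw [← mul_assoc, mul_assoc (f i), horth i j hij, mul_zero, zero_mul]
  have hcor : ∀ (i j : Fin n) (x : R), d i0 * (f i * x * g j) * d i0 = f i * x * g j := by
    intro i j x
    rw [← mul_assoc, ← mul_assoc, hf0, mul_assoc, hg0]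
  have hins : ∀ p q : R, p * q = ∑ k, p * g k * (f k * q) := by
    intro p q
    have h1 : p * q = ∑ k, p * d k * q := by
      rw [← Finset.sum_mul, ← Finset.mul_sum, hsum, mul_one]
    rw [h1]
    exact Finset.sum_congr rfl fun k _ => by rw [← hgf k]; simp [mul_assoc]
  refine ⟨{
    toFun := fun x => Matrix.of fun i j =>
      (⟨f i * x * g j, hcor i j x⟩ : Corner (d i0) (hidem i0))
    invFun := fun M => ∑ i, ∑ j, g i * (M i j).1 * f j
    left_inv := ?_
    right_inv := ?_
    map_mul' := ?_
    map_add' := ?_ }⟩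
  · intro x
    show (∑ i, ∑ j, g i * (f i * x * g j) * f j) = x
    have hterm : ∀ i j : Fin n, g i * (f i * x * g j) * f j = d i * x * d j := by
      intro i j
      calc g i * (f i * x * g j) * f j = g i * f i * x * (g j * f j) := by simp [mul_assoc]
        _ = d i * x * d j := by rw [hgf, hgf]
    simp only [hterm]
    have h2 : ∀ i : Fin n, ∑ j, d i * x * d j = d i * x := fun i => by
      rw [← Finset.mul_sum, hsum, mul_one]
    simp only [h2]
    rw [← Finset.sum_mul, hsum, one_mul]
  · intro M
    ext i j
    refine Subtype.ext ?_
    show f i * (∑ k, ∑ l, g k * (M k l).1 * f l) * g j = (M i j).1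
    rw [Finset.mul_sum, Finset.sum_mul]
    calc ∑ k, (f i * ∑ l, g k * (M k l).1 * f l) * g j
        = ∑ k, ∑ l, (f i * g k) * (M k l).1 * (f l * g j) := by
          refine Finset.sum_congr rfl fun k _ => ?_
          rw [Finset.mul_sum, Finset.sum_mul]
          exact Finset.sum_congr rfl fun l _ => by simp [mul_assoc]
      _ = ∑ l, (f i * g i) * (M i l).1 * (f l * g j) :=
          Finset.sum_eq_single_of_mem i (Finset.mem_univ i) fun k _ hk =>
            Finset.sum_eq_zero fun l _ => by rw [hfg0 i k (Ne.symm hk), zero_mul, zero_mul]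
      _ = (f i * g i) * (M i j).1 * (f j * g j) :=
          Finset.sum_eq_single_of_mem j (Finset.mem_univ j) fun l _ hl => by
            rw [hfg0 l j hl, mul_zero]
      _ = (M i j).1 := by rw [hfg i, hfg j]; exact Corner.prop (M i j)
  · intro x y
    ext i j
    refine Subtype.ext ?_
    rw [Matrix.mul_apply, Corner.val_sum]
    show f i * (x * y) * g j = ∑ k, f i * x * g k * (f k * y * g j)
    rw [hins x y, Finset.mul_sum, Finset.sum_mul]
    exact Finset.sum_congr rfl fun k _ => by simp [mul_assoc]
  · intro x y
    ext i j
    refine Subtype.ext ?_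
    rw [Matrix.add_apply, Corner.val_add]
    show f i * (x + y) * g j = f i * x * g j + f i * y * g j
    rw [mul_add, add_mul]
end
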